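/- Let F be the formal power series over ℚ whose coefficient of q^n is (n+1)·σ₁(n+1), i.e., F = Σ_{k≥1} k·σ₁(k)·q^{k−1}. Then for every natural number g ≥ 1, the Bryan–Leung count N_{g,5} := g · (coefficient of q^5 in F^{g−1}) satisfies N_{g,5} = (12/5)·g(g−1)(27g⁴ − 198g³ + 687g² − 1213g + 860). -/

import Mathlib

/-- The Bryan–Leung power series `F = Σ_{k≥1} k·σ₁(k)·q^{k−1}` over `ℚ`,
whose coefficient of `q^n` is `(n+1)·σ₁(n+1)`. -/
noncomputable def FBL : PowerSeries ℚ :=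
  PowerSeries.mk fun n => (((n + 1) * ArithmeticFunction.sigma 1 (n + 1) : ℕ) : ℚ)

lemma FBL_coeff (n : ℕ) :
    PowerSeries.coeff (R := ℚ) n FBL = (((n + 1) * ArithmeticFunction.sigma 1 (n + 1) : ℕ) : ℚ) := by
  simp [FBL]

lemma FBL_coeff0 : PowerSeries.coeff (R := ℚ) 0 FBL = 1 := by
  rw [FBL_coeff]; norm_num [show ArithmeticFunction.sigma 1 1 = 1 from by decide]
lemma FBL_coeff1 : PowerSeries.coeff (R := ℚ) 1 FBL = 6 := by
  rw [FBL_coeff]; norm_num [show ArithmeticFunction.sigma 1 2 = 3 from by decide]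
lemma FBL_coeff2 : PowerSeries.coeff (R := ℚ) 2 FBL = 12 := by
  rw [FBL_coeff]; norm_num [show ArithmeticFunction.sigma 1 3 = 4 from by decide]
lemma FBL_coeff3 : PowerSeries.coeff (R := ℚ) 3 FBL = 28 := by
  rw [FBL_coeff]; norm_num [show ArithmeticFunction.sigma 1 4 = 7 from by decide]
lemma FBL_coeff4 : PowerSeries.coeff (R := ℚ) 4 FBL = 30 := by
  rw [FBL_coeff]; norm_num [show ArithmeticFunction.sigma 1 5 = 6 from by decide]
lemma FBL_coeff5 : PowerSeries.coeff (R := ℚ) 5 FBL = 72 := by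
  rw [FBL_coeff]; norm_num [show ArithmeticFunction.sigma 1 6 = 12 from by decide]

lemma FBL_pow_coeffs (m : ℕ) :
    PowerSeries.coeff (R := ℚ) 0 (FBL ^ m) = 1 ∧
    PowerSeries.coeff (R := ℚ) 1 (FBL ^ m) = 6 * m ∧
    PowerSeries.coeff (R := ℚ) 2 (FBL ^ m) = 18 * (m : ℚ) ^ 2 - 6 * m ∧
    PowerSeries.coeff (R := ℚ) 3 (FBL ^ m) = 36 * (m : ℚ) ^ 3 - 36 * (m : ℚ) ^ 2 + 28 * m ∧
    PowerSeries.coeff (R := ℚ) 4 (FBL ^ m) =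
      54 * (m : ℚ) ^ 4 - 108 * (m : ℚ) ^ 3 + 186 * (m : ℚ) ^ 2 - 102 * m ∧
    PowerSeries.coeff (R := ℚ) 5 (FBL ^ m) =
      (324 * (m : ℚ) ^ 5 - 1080 * (m : ℚ) ^ 4 + 3060 * (m : ℚ) ^ 3 - 3900 * (m : ℚ) ^ 2
        + 1956 * m) / 5 := by
  induction m with
  | zero => norm_num
  | succ m ih =>
    obtain ⟨h0, h1, h2, h3, h4, h5⟩ := ih
    have hmul : ∀ n : ℕ, PowerSeries.coeff (R := ℚ) n (FBL ^ (m + 1)) =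
        ∑ k ∈ Finset.range (n + 1),
          PowerSeries.coeff (R := ℚ) k (FBL ^ m) * PowerSeries.coeff (R := ℚ) (n - k) FBL := by
      intro n
      rw [pow_succ, PowerSeries.coeff_mul, Finset.Nat.sum_antidiagonal_eq_sum_range_succ_mk]
    refine ⟨?_, ?_, ?_, ?_, ?_, ?_⟩ <;>
      rw [hmul] <;>
      simp only [Finset.sum_range_succ, Finset.sum_range_zero] <;>
      norm_num [h0, h1, h2, h3, h4, h5, FBL_coeff0, FBL_coeff1, FBL_coeff2, FBL_coeff3,
        FBL_coeff4, FBL_coeff5] <;> ring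

/-- The Bryan–Leung count `N_{g,5} := g · (coefficient of q^5 in F^{g−1})`
is given by the node polynomial of Table (5.1). -/
theorem N_g_5 (g : ℕ) (hg : 1 ≤ g) :
    (g : ℚ) * (PowerSeries.coeff (R := ℚ) 5) (FBL ^ (g - 1)) =
      (12 / 5 : ℚ) * (g : ℚ) * ((g : ℚ) - 1) * (27 * (g : ℚ) ^ 4 - 198 * (g : ℚ) ^ 3 + 687 * (g : ℚ) ^ 2 - 1213 * (g : ℚ) + 860) := by
  obtain ⟨m, rfl⟩ := Nat.exists_eq_add_of_le hg
  have h5 := (FBL_pow_coeffs m).2.2.2.2.2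
  simp only [Nat.add_sub_cancel_left, h5] -- 1 + m - 1 = m
  push_cast
  ring
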